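/- Let λ, α ∈ ℂ \ {0} and β ∈ ℂ. Define operators on ℂ[s,t]: E_i(g)(s,t) = λ^i α(t/2 + β)g(s−i, t−2) and F_j(g)(s,t) = −(λ^j/α)(t/2 − β)g(s−j, t+2). Then for all i, j ∈ ℤ and g ∈ ℂ[s,t], (E_i ∘ F_j − F_j ∘ E_i)(g)(s,t) = λ^{i+j}·t·g(s−i−j, t). -/

import Mathlib

open MvPolynomial

abbrev R2 : Type := MvPolynomial (Fin 2) ℂ

/-- Substitution `g(s,t) ↦ g(s - u, t + v)`. -/
noncomputable def sh (u v : ℂ) : R2 →ₐ[ℂ] R2 := aeval ![X 0 - C u, X 1 + C v]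

/-- Action of `e_i` in `Θ(λ,α,β,γ)`. -/
noncomputable def thE (lam a b : ℂ) (i : ℤ) (g : R2) : R2 :=
  C (lam ^ i * a) * (C 2⁻¹ * X 1 + C b) * sh (i : ℂ) (-2) g

/-- Action of `f_i` in `Θ(λ,α,β,γ)`. -/
noncomputable def thF (lam a b : ℂ) (i : ℤ) (g : R2) : R2 :=
  C (-(lam ^ i / a)) * (C 2⁻¹ * X 1 - C b) * sh (i : ℂ) 2 g

/-- Action of `h_i`. -/
noncomputable def opH (lam : ℂ) (i : ℤ) (g : R2) : R2 :=
  C (lam ^ i) * X 1 * sh (i : ℂ) 0 g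

lemma sh_X0 (u v : ℂ) : sh u v (X 0) = X 0 - C u := by simp [sh]

lemma sh_X1 (u v : ℂ) : sh u v (X 1) = X 1 + C v := by simp [sh]

lemma sh_C (u v c : ℂ) : sh u v (C c) = C c := by
  simp [sh, algHom_C]

lemma sh_comp (u v u' v' : ℂ) (g : R2) :
    sh u v (sh u' v' g) = sh (u + u') (v + v') g := by
  have h : (sh u v).comp (sh u' v') = sh (u + u') (v + v') := by
    apply MvPolynomial.algHom_ext
    intro k
    fin_cases k <;>
      simp [map_sub, map_add, sh_X0, sh_X1, sh_C, map_ofNat] <;> ring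
  exact congrFun (congrArg DFunLike.coe h) g

theorem stmt17 (lam a : ℂ) (hlam : lam ≠ 0) (ha : a ≠ 0) (b : ℂ) (i j : ℤ)
    (g : R2) :
    thE lam a b i (thF lam a b j g) - thF lam a b j (thE lam a b i g)
      = opH lam (i + j) g := by
  simp only [thE, thF, opH, map_mul, map_add, map_sub, sh_C, sh_X1, sh_comp]
  simp only [← C_mul]
  rw [show ((i : ℂ) + j) = ((i + j : ℤ) : ℂ) by push_cast; ring,
      show ((j : ℂ) + i) = ((i + j : ℤ) : ℂ) by push_cast; ring,
      show ((-2 : ℂ) + 2) = 0 by ring, show ((2 : ℂ) + -2) = 0 by ring]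
  set P : R2 := sh ((i + j : ℤ) : ℂ) 0 g with hP
  have h1 : (C (lam ^ i * a) : R2) * C (-(lam ^ j / a)) = -C (lam ^ (i + j)) := by
    rw [← map_neg, ← C_mul]; congr 1; rw [zpow_add₀ hlam]; field_simp
  have h2 : (C (-(lam ^ j / a)) : R2) * C (lam ^ i * a) = -C (lam ^ (i + j)) := by
    rw [mul_comm]; exact h1
  set K : R2 := C (lam ^ (i + j)) with hK
  have hc2 : (C (2⁻¹ : ℂ) : R2) * C (2 : ℂ) = 1 := by rw [← C_mul]; norm_num
  have hcm2 : (C (2⁻¹ : ℂ) : R2) * C (-2 : ℂ) = -1 := by rw [← C_mul]; norm_num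
  set c : R2 := C (2⁻¹ : ℂ)
  set x : R2 := (X 1 : R2)
  set dm2 : R2 := C (-2 : ℂ)
  set d2 : R2 := C (2 : ℂ)
  set B : R2 := C b
  calc C (lam ^ i * a) * (c * x + B) * (C (-(lam ^ j / a)) * (c * (x + dm2) - B) * P)
        - C (-(lam ^ j / a)) * (c * x - B) * (C (lam ^ i * a) * (c * (x + d2) + B) * P)
      = (C (lam ^ i * a) * C (-(lam ^ j / a))) * ((c * x + B) * (c * (x + dm2) - B)) * P
        - (C (-(lam ^ j / a)) * C (lam ^ i * a)) * ((c * x - B) * (c * (x + d2) + B)) * P := by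
        ring
    _ = K * x * P := by
        rw [h1, h2]
        have h2c : (2 : R2) * c = 1 := by
          rw [show (2 : R2) = d2 from (map_ofNat C 2).symm, mul_comm]; exact hc2
        linear_combination (-K * P * c * x - K * P * B) * hcm2
          + (K * P * c * x - K * P * B) * hc2 + (K * x * P) * h2c
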